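/- Let n ≥ 8 with n ≢ 1 (mod 3). Define the n×n matrix L̃ = ((n−1)/3)I_n − (1/3)[[0, e'],[e, 0]] + [[0, 0'],[0, M]], where M = (1/3)circ(x̄') with x̄ = (2−n, 1,−2,1, …, 1,−2,1)' ∈ R^{n-1} if n ≡ 2 (mod 3), and M = (1/3)circ(ȳ') with ȳ = (−n, 2,−1,−1, …, 2,−1,−1, 2)' ∈ R^{n-1} if n ≡ 0 (mod 3). Then with w = (1/6)(7−n, 1, …, 1)' ∈ R^n, the inverse of the eccentricity matrix satisfies E(W_n)^{-1} = −(1/2)L̃ + (6/(n−1))ww'. -/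

import Mathlib

open Matrix

noncomputable section

/-- Tridiagonal matrix of order `m` with `a` on the diagonal, `b` on the superdiagonal
and `c` on the subdiagonal. -/
def tridiag {R : Type*} [Zero R] (m : ℕ) (a b c : R) : Matrix (Fin m) (Fin m) R :=
  Matrix.of fun i j =>
    if (i : ℕ) = (j : ℕ) then a
    else if (j : ℕ) = (i : ℕ) + 1 then b
    else if (i : ℕ) = (j : ℕ) + 1 then c
    else 0

/-- The bordered matrix `[[0, e'],[e, A]]` where `e` is the all-ones vector. -/
def border {R : Type*} [Zero R] [One R] {m : ℕ} (A : Matrix (Fin m) (Fin m) R) :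
    Matrix (Fin (m + 1)) (Fin (m + 1)) R :=
  Matrix.of fun i j =>
    if hi : i = 0 then (if j = 0 then 0 else 1)
    else if hj : j = 0 then 1
    else A (i.pred hi) (j.pred hj)

/-- The circulant matrix whose first row is `c`, each subsequent row the cyclic
right shift of the previous one. -/
def circ {R : Type*} {m : ℕ} (c : Fin m → R) : Matrix (Fin m) (Fin m) R :=
  Matrix.of fun i j => c (j - i)

/-- The eccentricity matrix of the wheel graph `W_n` (hub is vertex `0`, cycle vertices
`1, …, n-1`): `E(W_n) = [[0, e'],[e, circ(0,0,2,…,2,0)]]`. -/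
def EW (n : ℕ) : Matrix (Fin n) (Fin n) ℝ :=
  Matrix.of fun i j =>
    if i = j then 0
    else if (i : ℕ) = 0 ∨ (j : ℕ) = 0 then 1
    else if ((j : ℕ) : ZMod (n - 1)) - ((i : ℕ) : ZMod (n - 1)) = 1
            ∨ ((i : ℕ) : ZMod (n - 1)) - ((j : ℕ) : ZMod (n - 1)) = 1 then 0
    else 2

/-- First row of the circulant block of the Laplacian-like matrix, as a function of the
cyclic index: `x̄ = (2-n, 1,-2,1, …, 1,-2,1)` if `n ≡ 2 (mod 3)` and
`ȳ = (-n, 2,-1,-1, …, 2,-1,-1, 2)` if `n ≡ 0 (mod 3)` (without the factor `1/3`). -/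
def barv (n : ℕ) : ℕ → ℝ := fun k =>
  if n % 3 = 2 then (if k = 0 then 2 - (n : ℝ) else if k % 3 = 2 then -2 else 1)
  else (if k = 0 then -(n : ℝ) else if k % 3 = 1 then 2 else -1)

/-- The Laplacian-like matrix
`L̃ = ((n-1)/3) I_n - (1/3)[[0,e'],[e,0]] + [[0,0'],[0,M]]`, where `M = (1/3) circ(x̄')`
if `n ≡ 2 (mod 3)` and `M = (1/3) circ(ȳ')` if `n ≡ 0 (mod 3)`. -/
def Ltilde (n : ℕ) : Matrix (Fin n) (Fin n) ℝ :=
  Matrix.of fun i j =>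
    (if i = j then ((n : ℝ) - 1) / 3 else 0)
    - (if ((i : ℕ) = 0 ∧ (j : ℕ) ≠ 0) ∨ ((i : ℕ) ≠ 0 ∧ (j : ℕ) = 0) then 1 / 3 else 0)
    + (if (i : ℕ) ≠ 0 ∧ (j : ℕ) ≠ 0 then
        (1 / 3) * barv n ((((j : ℕ) : ZMod (n - 1)) - ((i : ℕ) : ZMod (n - 1))).val)
      else 0)

lemma mod_inj {m : ℕ} (hm : 1 ≤ m) {v w : ℕ} (hv1 : 1 ≤ v) (hv : v ≤ m) (hw1 : 1 ≤ w)
    (hw : w ≤ m) (h : v % m = w % m) : v = w := by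
  rcases eq_or_lt_of_le hv with rfl | hv'
  · rcases eq_or_lt_of_le hw with h' | hw'
    · omega
    · rw [Nat.mod_self, Nat.mod_eq_of_lt hw'] at h; omega
  · rcases eq_or_lt_of_le hw with rfl | hw'
    · rw [Nat.mod_self, Nat.mod_eq_of_lt hv'] at h; omega
    · rw [Nat.mod_eq_of_lt hv', Nat.mod_eq_of_lt hw'] at h; exact h

lemma cast_inj_iff {m : ℕ} [NeZero m] {i k : Fin (m+1)} (hi : (i:ℕ) ≠ 0) (hk : (k:ℕ) ≠ 0) :
    (((i:ℕ) : ZMod m) = ((k:ℕ) : ZMod m)) ↔ i = k := by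
  constructor
  · intro h
    have h2 := congrArg ZMod.val h
    rw [ZMod.val_natCast, ZMod.val_natCast] at h2
    have hi' : (i:ℕ) ≤ m := Nat.lt_succ_iff.mp i.isLt
    have hk' : (k:ℕ) ≤ m := Nat.lt_succ_iff.mp k.isLt
    exact Fin.ext (mod_inj (NeZero.pos m) (by omega) hi' (by omega) hk' h2)
  · rintro rfl; rfl

lemma e_bij {m : ℕ} [NeZero m] :
    Function.Bijective (fun k : Fin m => (((k:ℕ)+1 : ℕ) : ZMod m)) := by
  rw [Fintype.bijective_iff_injective_and_card]
  refine ⟨?_, by simp [ZMod.card]⟩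
  intro k k' h
  have h2 := congrArg ZMod.val h
  rw [ZMod.val_natCast, ZMod.val_natCast] at h2
  have hk := k.isLt
  have hk' := k'.isLt
  have := mod_inj (NeZero.pos m) (by omega) (by omega) (by omega) (by omega) h2
  exact Fin.ext (by omega)

lemma sum_offdiag {m : ℕ} [NeZero m] (F : Fin (m+1) → ℝ) (G : ZMod m → ℝ)
    (hFG : ∀ k : Fin (m+1), (k:ℕ) ≠ 0 → F k = G ((k:ℕ) : ZMod m)) :
    ∑ k, F k = F 0 + ∑ c : ZMod m, G c := by
  rw [Fin.sum_univ_succ]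
  congr 1
  exact Fintype.sum_bijective _ e_bij (fun k => F k.succ) G
    (fun k => by
      show F k.succ = _
      rw [hFG k.succ (by simp [Fin.val_succ])]
      norm_num [Fin.val_succ])

lemma sum_val_zmod {m : ℕ} [NeZero m] (f : ℕ → ℝ) :
    ∑ c : ZMod m, f c.val = ∑ k ∈ Finset.range m, f k := by
  refine Finset.sum_nbij' (fun c => c.val) (fun k => (k : ZMod m)) ?_ ?_ ?_ ?_ ?_
  · intro a _; exact Finset.mem_range.mpr (ZMod.val_lt a)
  · intro a _; exact Finset.mem_univ _
  · intro a _; exact ZMod.natCast_rightInverse a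
  · intro a ha; exact ZMod.val_cast_of_lt (Finset.mem_range.mp ha)
  · intro a _; rfl

lemma sumA (q : ℕ) :
    ∑ k ∈ Finset.range (3*q), (if (k+1) % 3 = 2 then (-2:ℝ) else 1) = 0 := by
  induction q with
  | zero => simp
  | succ q ih =>
    have h : 3*(q+1) = (3*q) + 1 + 1 + 1 := by ring
    rw [h, Finset.sum_range_succ, Finset.sum_range_succ, Finset.sum_range_succ, ih]
    rw [if_neg (by omega), if_pos (by omega), if_neg (by omega)]
    ring

lemma sumB (q : ℕ) :
    ∑ k ∈ Finset.range (3*q+1), (if (k+1) % 3 = 1 then (2:ℝ) else -1) = 2 := by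
  induction q with
  | zero => simp
  | succ q ih =>
    have h : 3*(q+1)+1 = (3*q+1) + 1 + 1 + 1 := by ring
    rw [h, Finset.sum_range_succ, Finset.sum_range_succ, Finset.sum_range_succ, ih]
    rw [if_neg (by omega), if_neg (by omega), if_pos (by omega)]
    ring

lemma sum_barv (m : ℕ) (hm : 7 ≤ m) (h3 : m % 3 ≠ 0) :
    ∑ k ∈ Finset.range m, barv (m+1) k = 1 - (m:ℝ) := by
  obtain ⟨m', rfl⟩ : ∃ m', m = m' + 1 := ⟨m-1, by omega⟩
  rw [Finset.sum_range_succ']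
  rcases (show (m'+1) % 3 = 1 ∨ (m'+1) % 3 = 2 by omega) with h | h
  · -- n % 3 = 2, m' = 3q
    have hn : (m'+1+1) % 3 = 2 := by omega
    obtain ⟨q, rfl⟩ : ∃ q, m' = 3*q := ⟨m'/3, by omega⟩
    have h0 : barv (3*q+1+1) 0 = 2 - ((3*q+1+1 : ℕ):ℝ) := by
      simp [barv, hn]
    rw [h0, Finset.sum_congr rfl (fun k _ => show barv (3*q+1+1) (k+1)
        = if (k+1) % 3 = 2 then (-2:ℝ) else 1 by simp [barv, hn]), sumA]
    push_cast; ring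
  · -- n % 3 = 0, m' = 3q+1
    have hn : (m'+1+1) % 3 ≠ 2 := by omega
    have hn0 : (m'+1+1) % 3 = 0 := by omega
    obtain ⟨q, rfl⟩ : ∃ q, m' = 3*q+1 := ⟨m'/3, by omega⟩
    have h0 : barv (3*q+1+1+1) 0 = -((3*q+1+1+1 : ℕ):ℝ) := by
      simp [barv, hn]
    rw [h0, Finset.sum_congr rfl (fun k _ => show barv (3*q+1+1+1) (k+1)
        = if (k+1) % 3 = 1 then (2:ℝ) else -1 by simp [barv, hn]), sumB]
    push_cast; ring

lemma barv2_zero (n : ℕ) (hn : n % 3 = 2) : barv n 0 = 2 - (n:ℝ) := by simp [barv, hn]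

lemma barv2_pos (n k : ℕ) (hn : n % 3 = 2) (hk : k ≠ 0) :
    barv n k = if k % 3 = 2 then (-2:ℝ) else 1 := by simp [barv, hn, hk]

lemma barv0_zero (n : ℕ) (hn : n % 3 ≠ 2) : barv n 0 = -(n:ℝ) := by simp [barv, hn]

lemma barv0_pos (n k : ℕ) (hn : n % 3 ≠ 2) (hk : k ≠ 0) :
    barv n k = if k % 3 = 1 then (2:ℝ) else -1 := by simp [barv, hn, hk]

lemma triple_nat (m t : ℕ) (hm : 7 ≤ m) (h3 : m % 3 ≠ 0) (ht : t < m) :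
    barv (m+1) ((t + (m-1)) % m) + barv (m+1) t + barv (m+1) ((t+1) % m) =
      if t = 0 then 3 - (m:ℝ) else if t = 1 ∨ t = m - 1 then -(m:ℝ) else 0 := by
  rcases (show t = 0 ∨ t = 1 ∨ t = m-1 ∨ (2 ≤ t ∧ t ≤ m-2) by omega) with
    rfl | rfl | rfl | ⟨h2, h2'⟩
  · have ha : (0 + (m-1)) % m = m - 1 := by
      rw [Nat.zero_add]; exact Nat.mod_eq_of_lt (by omega)
    have hb : (0+1) % m = 1 := Nat.mod_eq_of_lt (by omega)
    rw [ha, hb, if_pos rfl]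
    rcases (show (m+1) % 3 = 2 ∨ (m+1) % 3 ≠ 2 ∧ (m+1) % 3 = 0 by omega) with hn | ⟨hn, hn0⟩
    · rw [barv2_pos _ _ hn (by omega), barv2_zero _ hn, barv2_pos _ _ hn (by omega),
        if_neg (by omega), if_neg (by omega)]
      push_cast; ring
    · rw [barv0_pos _ _ hn (by omega), barv0_zero _ hn, barv0_pos _ _ hn (by omega),
        if_pos (by omega), if_pos (by omega)]
      push_cast; ring
  · have ha : (1 + (m-1)) % m = 0 := by rw [show 1 + (m-1) = m by omega, Nat.mod_self]
    have hb : (1+1) % m = 2 := Nat.mod_eq_of_lt (by omega)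
    rw [ha, hb, if_neg (by omega), if_pos (Or.inl rfl)]
    rcases (show (m+1) % 3 = 2 ∨ (m+1) % 3 ≠ 2 ∧ (m+1) % 3 = 0 by omega) with hn | ⟨hn, hn0⟩
    · rw [barv2_zero _ hn, barv2_pos _ _ hn (by omega), barv2_pos _ _ hn (by omega),
        if_neg (by omega), if_pos (by omega)]
      push_cast; ring
    · rw [barv0_zero _ hn, barv0_pos _ _ hn (by omega), barv0_pos _ _ hn (by omega),
        if_pos (by omega), if_neg (by omega)]
      push_cast; ring
  · have ha : ((m-1) + (m-1)) % m = m - 2 := by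
      rw [show (m-1) + (m-1) = m + (m-2) by omega, Nat.add_mod_left]
      exact Nat.mod_eq_of_lt (by omega)
    have hb : ((m-1)+1) % m = 0 := by rw [show (m-1) + 1 = m by omega, Nat.mod_self]
    rw [ha, hb, if_neg (by omega), if_pos (Or.inr rfl)]
    rcases (show (m+1) % 3 = 2 ∨ (m+1) % 3 ≠ 2 ∧ (m+1) % 3 = 0 by omega) with hn | ⟨hn, hn0⟩
    · rw [barv2_pos _ _ hn (by omega), barv2_pos _ _ hn (by omega), barv2_zero _ hn,
        if_pos (by omega), if_neg (by omega)]
      push_cast; ring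
    · rw [barv0_pos _ _ hn (by omega), barv0_pos _ _ hn (by omega), barv0_zero _ hn,
        if_neg (by omega), if_pos (by omega)]
      push_cast; ring
  · have ha : (t + (m-1)) % m = t - 1 := by
      rw [show t + (m-1) = m + (t-1) by omega, Nat.add_mod_left]
      exact Nat.mod_eq_of_lt (by omega)
    have hb : (t+1) % m = t + 1 := Nat.mod_eq_of_lt (by omega)
    rw [ha, hb, if_neg (by omega), if_neg (by omega)]
    rcases (show (m+1) % 3 = 2 ∨ (m+1) % 3 ≠ 2 ∧ (m+1) % 3 = 0 by omega) with hn | ⟨hn, hn0⟩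
    · rw [barv2_pos _ _ hn (by omega), barv2_pos _ _ hn (by omega),
        barv2_pos _ _ hn (by omega)]
      rcases (show t % 3 = 0 ∨ t % 3 = 1 ∨ t % 3 = 2 by omega) with h | h | h
      · rw [if_pos (by omega), if_neg (by omega), if_neg (by omega)]; ring
      · rw [if_neg (by omega), if_neg (by omega), if_pos (by omega)]; ring
      · rw [if_neg (by omega), if_pos (by omega), if_neg (by omega)]; ring
    · rw [barv0_pos _ _ hn (by omega), barv0_pos _ _ hn (by omega),
        barv0_pos _ _ hn (by omega)]
      rcases (show t % 3 = 0 ∨ t % 3 = 1 ∨ t % 3 = 2 by omega) with h | h | h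
      · rw [if_neg (by omega), if_neg (by omega), if_pos (by omega)]; ring
      · rw [if_neg (by omega), if_pos (by omega), if_neg (by omega)]; ring
      · rw [if_pos (by omega), if_neg (by omega), if_neg (by omega)]; ring

lemma neg_one_cast {m : ℕ} [NeZero m] (hm : 7 ≤ m) : ((m-1 : ℕ) : ZMod m) = -1 := by
  have h : (((m-1)+1 : ℕ) : ZMod m) = 0 := by
    rw [show m-1+1 = m by omega, ZMod.natCast_self]
  rw [Nat.cast_add, Nat.cast_one] at h
  exact eq_neg_of_add_eq_zero_left h

lemma val_sub_one {m : ℕ} [NeZero m] (hm : 7 ≤ m) (d : ZMod m) :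
    (d - 1).val = (d.val + (m-1)) % m := by
  rw [show d - 1 = d + ((m-1 : ℕ) : ZMod m) by rw [neg_one_cast hm]; ring,
    ZMod.val_add, ZMod.val_natCast, Nat.mod_eq_of_lt (show m - 1 < m by omega)]

lemma val_add_one {m : ℕ} [NeZero m] (hm : 7 ≤ m) (d : ZMod m) :
    (d + 1).val = (d.val + 1) % m := by
  rw [ZMod.val_add, ZMod.val_one_eq_one_mod, Nat.mod_eq_of_lt (show 1 < m by omega)]

lemma eq_one_iff_val {m : ℕ} [NeZero m] (hm : 7 ≤ m) (d : ZMod m) :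
    d = 1 ↔ d.val = 1 := by
  constructor
  · rintro rfl; rw [ZMod.val_one_eq_one_mod]; exact Nat.mod_eq_of_lt (by omega)
  · intro h
    have h2 : ((d.val : ℕ) : ZMod m) = ((1 : ℕ) : ZMod m) := by rw [h]
    rwa [ZMod.natCast_rightInverse d, Nat.cast_one] at h2

lemma eq_neg_one_iff_val {m : ℕ} [NeZero m] (hm : 7 ≤ m) (d : ZMod m) :
    d = -1 ↔ d.val = m - 1 := by
  constructor
  · rintro rfl
    rw [← neg_one_cast hm, ZMod.val_natCast]; exact Nat.mod_eq_of_lt (by omega)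
  · intro h
    have h2 : ((d.val : ℕ) : ZMod m) = ((m-1 : ℕ) : ZMod m) := by rw [h]
    rwa [ZMod.natCast_rightInverse d, neg_one_cast hm] at h2

lemma triple_zmod {m : ℕ} [NeZero m] (hm : 7 ≤ m) (h3 : m % 3 ≠ 0) (d : ZMod m) :
    barv (m+1) ((d - 1).val) + barv (m+1) d.val + barv (m+1) ((d + 1).val) =
      if d = 0 then 3 - (m:ℝ) else if d = 1 ∨ d = -1 then -(m:ℝ) else 0 := by
  rw [val_sub_one hm, val_add_one hm, triple_nat m d.val hm h3 (ZMod.val_lt d)]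
  simp only [ZMod.val_eq_zero, eq_one_iff_val hm d, eq_neg_one_iff_val hm d]

lemma Esum {m : ℕ} [NeZero m] (hm : 7 ≤ m) (a : ZMod m) (H : ZMod m → ℝ) :
    ∑ c : ZMod m, (if c = a then 0 else if c - a = 1 ∨ a - c = 1 then 0 else 2) * H c
      = 2 * ∑ c : ZMod m, H c - 2 * H a - 2 * H (a+1) - 2 * H (a-1) := by
  have h1 : (1 : ZMod m) ≠ 0 := by
    intro h
    have h' := congrArg ZMod.val h
    rw [ZMod.val_one_eq_one_mod, Nat.mod_eq_of_lt (show 1 < m by omega), ZMod.val_zero] at h'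
    omega
  have h2 : (1 : ZMod m) + 1 ≠ 0 := by
    intro h
    have h' : ((2 : ℕ) : ZMod m) = 0 := by push_cast; linear_combination h
    have h'' := congrArg ZMod.val h'
    rw [ZMod.val_natCast, Nat.mod_eq_of_lt (show 2 < m by omega), ZMod.val_zero] at h''
    omega
  have key : ∀ c : ZMod m,
      (if c = a then 0 else if c - a = 1 ∨ a - c = 1 then 0 else 2) * H c
        = 2 * H c - (if c = a then 2 * H c else 0) - (if c = a + 1 then 2 * H c else 0)
          - (if c = a - 1 then 2 * H c else 0) := by
    intro c
    by_cases hc0 : c = a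
    · subst hc0
      have n1 : ¬ c = c + 1 := fun h => h1 (by linear_combination -h)
      have n2 : ¬ c = c - 1 := fun h => h1 (by linear_combination h)
      rw [if_pos rfl, if_pos rfl, if_neg n1, if_neg n2]
      ring
    · by_cases hc1 : c = a + 1
      · subst hc1
        have hc0' : ¬ a + 1 = a := hc0
        have n2 : ¬ a + 1 = a - 1 := fun h => h2 (by linear_combination h)
        rw [if_neg hc0', if_pos (Or.inl (show a + 1 - a = 1 by ring)), if_neg hc0',
          if_pos rfl, if_neg n2]
        ring
      · by_cases hc2 : c = a - 1
        · subst hc2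
          have hc0' : ¬ a - 1 = a := hc0
          have n1' : ¬ a - 1 = a + 1 := fun h => h2 (by linear_combination -h)
          rw [if_neg hc0', if_pos (Or.inr (show a - (a - 1) = 1 by ring)), if_neg hc0',
            if_neg n1', if_pos rfl]
          ring
        · have n : ¬ (c - a = 1 ∨ a - c = 1) := by
            rintro (h | h)
            · exact hc1 (by linear_combination h)
            · exact hc2 (by linear_combination -h)
          rw [if_neg hc0, if_neg n, if_neg hc0, if_neg hc1, if_neg hc2]
          ring
  rw [Finset.sum_congr rfl (fun c _ => key c)]
  rw [Finset.sum_sub_distrib, Finset.sum_sub_distrib, Finset.sum_sub_distrib,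
    ← Finset.mul_sum]
  simp [Finset.sum_ite_eq']

set_option maxHeartbeats 1000000 in
theorem stmt18 (n : ℕ) (h8 : 8 ≤ n) (h1 : n % 3 ≠ 1)
    (w : Fin n → ℝ) (hw : ∀ i, w i = if (i : ℕ) = 0 then (7 - (n : ℝ)) / 6 else 1 / 6) :
    (EW n)⁻¹ =
      (-(1 / 2) : ℝ) • Ltilde n
        + (6 / ((n : ℝ) - 1)) • Matrix.of (fun i j => w i * w j) := by
  obtain ⟨m, rfl⟩ : ∃ m, n = m + 1 := ⟨n - 1, by omega⟩
  have hm : 7 ≤ m := by omega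
  have h3 : m % 3 ≠ 0 := by omega
  haveI : NeZero m := ⟨by omega⟩
  have hm0 : (m:ℝ) ≠ 0 := Nat.cast_ne_zero.mpr (by omega)
  have hcast : ((m+1 : ℕ) : ℝ) - 1 = (m:ℝ) := by push_cast; ring
  have hone : (1 : ZMod m) ≠ 0 := by
    intro h
    have h' := congrArg ZMod.val h
    rw [ZMod.val_one_eq_one_mod, Nat.mod_eq_of_lt (show 1 < m by omega), ZMod.val_zero] at h'
    omega
  have htwo : (2 : ZMod m) ≠ 0 := by
    intro h
    have h' : ((2 : ℕ) : ZMod m) = 0 := by push_cast; linear_combination h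
    have h'' := congrArg ZMod.val h'
    rw [ZMod.val_natCast, Nat.mod_eq_of_lt (show 2 < m by omega), ZMod.val_zero] at h''
    omega
  set B := ((-(1 / 2) : ℝ) • Ltilde (m+1)
      + (6 / (((m+1:ℕ) : ℝ) - 1)) • Matrix.of (fun i j => w i * w j)) with hB
  -- entry lemmas for B
  have hB00 : B 0 0 = -(m:ℝ)/6 + (6-(m:ℝ))^2/(6*(m:ℝ)) := by
    rw [hB]
    simp only [Matrix.add_apply, Matrix.smul_apply, Matrix.of_apply, smul_eq_mul, Ltilde,
      Nat.add_sub_cancel]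
    rw [hcast, hw 0]
    norm_num
    field_simp
    ring
  have hBk0 : ∀ k : Fin (m+1), (k:ℕ) ≠ 0 → B k 0 = 1/(m:ℝ) := by
    intro k hk
    rw [hB]
    simp only [Matrix.add_apply, Matrix.smul_apply, Matrix.of_apply, smul_eq_mul, Ltilde,
      Nat.add_sub_cancel]
    rw [hcast, hw k, hw 0, if_neg hk,
      if_pos (show ((0 : Fin (m+1)):ℕ) = 0 from rfl),
      if_neg (show ¬ k = 0 from fun h => hk (by rw [h]; rfl)),
      if_pos (show (((k:ℕ) = 0 ∧ ((0:Fin (m+1)):ℕ) ≠ 0) ∨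
        ((k:ℕ) ≠ 0 ∧ ((0:Fin (m+1)):ℕ) = 0)) from Or.inr ⟨hk, rfl⟩),
      if_neg (show ¬ ((k:ℕ) ≠ 0 ∧ ((0:Fin (m+1)):ℕ) ≠ 0) from fun h => h.2 rfl)]
    field_simp
    push_cast; ring
  -- entry lemmas for EW
  have hEW00 : EW (m+1) 0 0 = 0 := by simp [EW]
  have hEW0k : ∀ k : Fin (m+1), (k:ℕ) ≠ 0 → EW (m+1) 0 k = 1 := by
    intro k hk
    simp only [EW, Matrix.of_apply, Nat.add_sub_cancel]
    rw [if_neg (show ¬ (0 : Fin (m+1)) = k from fun h => hk (by rw [← h]; rfl)),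
      if_pos (show ((0:Fin (m+1)):ℕ) = 0 ∨ (k:ℕ) = 0 from Or.inl rfl)]
  have hEWi0 : ∀ i : Fin (m+1), (i:ℕ) ≠ 0 → EW (m+1) i 0 = 1 := by
    intro i hi
    simp only [EW, Matrix.of_apply, Nat.add_sub_cancel]
    rw [if_neg (show ¬ i = 0 from fun h => hi (by rw [h]; rfl)),
      if_pos (show (i:ℕ) = 0 ∨ ((0:Fin (m+1)):ℕ) = 0 from Or.inr rfl)]
  have hEWik : ∀ i k : Fin (m+1), (i:ℕ) ≠ 0 → (k:ℕ) ≠ 0 → EW (m+1) i k =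
      (if ((k:ℕ) : ZMod m) = ((i:ℕ) : ZMod m) then 0
       else if ((k:ℕ) : ZMod m) - ((i:ℕ) : ZMod m) = 1
              ∨ ((i:ℕ) : ZMod m) - ((k:ℕ) : ZMod m) = 1 then 0 else 2) := by
    intro i k hi hk
    simp only [EW, Matrix.of_apply, Nat.add_sub_cancel]
    rw [if_neg (show ¬ ((i:ℕ) = 0 ∨ (k:ℕ) = 0) from by push_neg; exact ⟨hi, hk⟩)]
    by_cases h : i = k
    · rw [if_pos h, if_pos ((cast_inj_iff hk hi).mpr h.symm)]
    · rw [if_neg h, if_neg (show ¬ ((k:ℕ) : ZMod m) = ((i:ℕ) : ZMod m) from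
        fun hc => h (((cast_inj_iff hk hi).mp hc).symm))]
  apply Matrix.inv_eq_right_inv
  ext i j
  rw [Matrix.mul_apply, Matrix.one_apply]
  by_cases hj : (j:ℕ) = 0
  · have hj' : j = 0 := Fin.ext hj
    subst hj'
    by_cases hi : (i:ℕ) = 0
    · have hi' : i = 0 := Fin.ext hi
      subst hi'
      rw [if_pos rfl]
      rw [sum_offdiag (fun k => EW (m+1) 0 k * B k 0) (fun _ => 1/(m:ℝ))
        (fun k hk => by
          show EW (m+1) 0 k * B k 0 = 1/(m:ℝ)
          rw [hEW0k k hk, hBk0 k hk, one_mul])]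
      rw [hEW00, zero_mul, zero_add, Finset.sum_const, Finset.card_univ, ZMod.card,
        nsmul_eq_mul]
      field_simp
    · set a : ZMod m := ((i:ℕ) : ZMod m) with ha
      rw [if_neg (show ¬ i = 0 from fun h => hi (by rw [h]; rfl))]
      rw [sum_offdiag (fun k => EW (m+1) i k * B k 0)
        (fun c => (if c = a then 0 else if c - a = 1 ∨ a - c = 1 then 0 else 2) * (1/(m:ℝ)))
        (fun k hk => by
          show EW (m+1) i k * B k 0
            = (if ((k:ℕ) : ZMod m) = a then 0
               else if ((k:ℕ) : ZMod m) - a = 1 ∨ a - ((k:ℕ) : ZMod m) = 1 then 0 else 2)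
              * (1/(m:ℝ))
          rw [hEWik i k hi hk, hBk0 k hk])]
      rw [hEWi0 i hi, one_mul, hB00, Esum hm a (fun _ => 1/(m:ℝ))]
      simp only [Finset.sum_const, Finset.card_univ, ZMod.card, nsmul_eq_mul]
      field_simp
      ring
  · set b : ZMod m := ((j:ℕ) : ZMod m) with hb
    set Hf : ZMod m → ℝ := fun c =>
      (if c = b then -(m:ℝ)/6 else 0) - (1/6) * barv (m+1) ((b - c).val) + 1/(6*(m:ℝ))
      with hHf
    have hB0j : B 0 j = 1/6 + (6-(m:ℝ))/(6*(m:ℝ)) := by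
      rw [hB]
      simp only [Matrix.add_apply, Matrix.smul_apply, Matrix.of_apply, smul_eq_mul, Ltilde,
        Nat.add_sub_cancel]
      rw [hw 0, hw j, if_pos (show ((0 : Fin (m+1)):ℕ) = 0 from rfl), if_neg hj,
        if_neg (show ¬ (0 : Fin (m+1)) = j from fun h => hj (by rw [← h]; rfl)),
        if_pos (show ((((0:Fin (m+1)):ℕ) = 0 ∧ (j:ℕ) ≠ 0) ∨
          (((0:Fin (m+1)):ℕ) ≠ 0 ∧ (j:ℕ) = 0)) from Or.inl ⟨rfl, hj⟩),
        if_neg (show ¬ (((0:Fin (m+1)):ℕ) ≠ 0 ∧ (j:ℕ) ≠ 0) from fun h => h.1 rfl), hcast]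
      push_cast
      field_simp
      ring
    have hBkj : ∀ k : Fin (m+1), (k:ℕ) ≠ 0 → B k j = Hf ((k:ℕ) : ZMod m) := by
      intro k hk
      rw [hB, hHf]
      simp only [Matrix.add_apply, Matrix.smul_apply, Matrix.of_apply, smul_eq_mul, Ltilde,
        Nat.add_sub_cancel]
      rw [hw k, hw j, if_neg hk, if_neg hj,
        if_neg (show ¬ (((k:ℕ) = 0 ∧ (j:ℕ) ≠ 0) ∨ ((k:ℕ) ≠ 0 ∧ (j:ℕ) = 0)) from
          fun hor => hor.elim (fun h => hk h.1) (fun h => hj h.2)),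
        if_pos (show ((k:ℕ) ≠ 0 ∧ (j:ℕ) ≠ 0) from ⟨hk, hj⟩), hcast]
      by_cases hkj : k = j
      · rw [if_pos hkj, if_pos (show ((k:ℕ) : ZMod m) = b from (cast_inj_iff hk hj).mpr hkj)]
        field_simp
        ring
      · rw [if_neg hkj, if_neg (show ¬ ((k:ℕ) : ZMod m) = b from
          fun hc => hkj ((cast_inj_iff hk hj).mp hc))]
        field_simp
        ring
    have sumH : ∑ c : ZMod m, Hf c = 0 := by
      rw [hHf]
      rw [Finset.sum_add_distrib, Finset.sum_sub_distrib, ← Finset.mul_sum]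
      rw [Fintype.sum_bijective (fun c : ZMod m => b - c) (Equiv.subLeft b).bijective
        (fun c => barv (m+1) ((b - c).val)) (fun d => barv (m+1) d.val) (fun c => rfl)]
      rw [sum_val_zmod (fun t => barv (m+1) t), sum_barv m hm h3,
        Finset.sum_ite_eq' Finset.univ b (fun _ => -(m:ℝ)/6),
        Finset.sum_const, Finset.card_univ, ZMod.card, nsmul_eq_mul]
      rw [if_pos (Finset.mem_univ b)]
      field_simp
      ring
    by_cases hi : (i:ℕ) = 0
    · have hi' : i = 0 := Fin.ext hi
      subst hi'
      rw [if_neg (show ¬ (0 : Fin (m+1)) = j from fun h => hj (by rw [← h]; rfl))]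
      rw [sum_offdiag (fun k => EW (m+1) 0 k * B k j) Hf
        (fun k hk => by
          show EW (m+1) 0 k * B k j = Hf ((k:ℕ) : ZMod m)
          rw [hEW0k k hk, hBkj k hk, one_mul])]
      rw [hEW00, zero_mul, zero_add, sumH]
    · set a : ZMod m := ((i:ℕ) : ZMod m) with ha
      rw [sum_offdiag (fun k => EW (m+1) i k * B k j)
        (fun c => (if c = a then 0 else if c - a = 1 ∨ a - c = 1 then 0 else 2) * Hf c)
        (fun k hk => by
          show EW (m+1) i k * B k j
            = (if ((k:ℕ) : ZMod m) = a then 0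
               else if ((k:ℕ) : ZMod m) - a = 1 ∨ a - ((k:ℕ) : ZMod m) = 1 then 0 else 2)
              * Hf ((k:ℕ) : ZMod m)
          rw [hEWik i k hi hk, hBkj k hk])]
      rw [hEWi0 i hi, one_mul, hB0j, Esum hm a Hf, sumH]
      have hHfa : Hf a = (if a = b then -(m:ℝ)/6 else 0)
          - 1/6 * barv (m+1) ((b - a).val) + 1/(6*(m:ℝ)) := rfl
      have hHfb : Hf (a+1) = (if a + 1 = b then -(m:ℝ)/6 else 0)
          - 1/6 * barv (m+1) ((b - (a+1)).val) + 1/(6*(m:ℝ)) := rfl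
      have hHfc : Hf (a-1) = (if a - 1 = b then -(m:ℝ)/6 else 0)
          - 1/6 * barv (m+1) ((b - (a-1)).val) + 1/(6*(m:ℝ)) := rfl
      rw [hHfa, hHfb, hHfc]
      rw [show b - (a+1) = b - a - 1 from by ring, show b - (a-1) = b - a + 1 from by ring]
      have ht := triple_zmod hm h3 (b - a)
      by_cases hd0 : b - a = 0
      · have hab : a = b := (sub_eq_zero.mp hd0).symm
        rw [if_pos ((cast_inj_iff hi hj).mp hab)]
        rw [if_pos hab,
          if_neg (show ¬ a + 1 = b from fun h => hone (by linear_combination h - hab)),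
          if_neg (show ¬ a - 1 = b from fun h => hone (by linear_combination hab - h))]
        rw [if_pos hd0] at ht
        have hX : barv (m+1) ((b - a - 1).val) =
            (3 - (m:ℝ)) - barv (m+1) ((b - a).val) - barv (m+1) ((b - a + 1).val) := by
          linear_combination ht
        rw [hX]
        field_simp
        ring
      · rw [if_neg (show ¬ i = j from fun h => hd0
          (sub_eq_zero.mpr ((cast_inj_iff hi hj).mpr h).symm))]
        by_cases hd1 : b - a = 1
        · rw [if_neg (show ¬ a = b from fun h => hone (by linear_combination -hd1 - h)),
            if_pos (show a + 1 = b from by linear_combination -hd1),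
            if_neg (show ¬ a - 1 = b from fun h =>
              htwo (by linear_combination -h - hd1))]
          rw [if_neg hd0, if_pos (Or.inl hd1)] at ht
          have hX : barv (m+1) ((b - a - 1).val) =
              -(m:ℝ) - barv (m+1) ((b - a).val) - barv (m+1) ((b - a + 1).val) := by
            linear_combination ht
          rw [hX]
          field_simp
          ring
        · by_cases hdm : b - a = -1
          · rw [if_neg (show ¬ a = b from fun h => hone (by linear_combination h + hdm)),
              if_neg (show ¬ a + 1 = b from fun h => htwo (by linear_combination h + hdm)),
              if_pos (show a - 1 = b from by linear_combination -hdm)]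
            rw [if_neg hd0, if_pos (Or.inr hdm)] at ht
            have hX : barv (m+1) ((b - a - 1).val) =
                -(m:ℝ) - barv (m+1) ((b - a).val) - barv (m+1) ((b - a + 1).val) := by
              linear_combination ht
            rw [hX]
            field_simp
            ring
          · rw [if_neg (show ¬ a = b from fun h => hd0 (sub_eq_zero.mpr h.symm)),
              if_neg (show ¬ a + 1 = b from fun h => hd1 (by linear_combination -h)),
              if_neg (show ¬ a - 1 = b from fun h => hdm (by linear_combination -h))]
            rw [if_neg hd0, if_neg (by rintro (h | h); exacts [hd1 h, hdm h])] at ht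
            have hX : barv (m+1) ((b - a - 1).val) =
                - barv (m+1) ((b - a).val) - barv (m+1) ((b - a + 1).val) := by
              linear_combination ht
            rw [hX]
            field_simp
            ring
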